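/- Let f : ℝ^n → ℝ be differentiable with gradient that is m-strongly monotone and M-Lipschitz (0 < m ≤ M), and let 0 < γ < 2/M. Then the map F(x) = x - γ∇f(x) satisfies ‖F(x) - F(y)‖ ≤ L‖x - y‖ for all x, y, where L = max{|1 - γm|, |1 - γM|}. -/

import Mathlib

section Aux

variable {E : Type*} [NormedAddCommGroup E] [InnerProductSpace ℝ E]

local notation "⟪" x ", " y "⟫" => @inner ℝ _ _ x y

lemma gd_lineDeriv [CompleteSpace E] (f : E → ℝ) (hf : Differentiable ℝ f) (x d : E) (t : ℝ) :
    HasDerivAt (fun s : ℝ => f (x + s • d)) (⟪gradient f (x + t • d), d⟫ : ℝ) t := by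
  have h1 : HasDerivAt (fun s : ℝ => x + s • d) d t := by
    simpa using ((hasDerivAt_id t).smul_const d).const_add x
  have h2 := ((hf _).hasGradientAt.hasFDerivAt).comp_hasDerivAt t h1
  simp only [InnerProductSpace.toDual_apply_apply] at h2
  exact h2

lemma gd_upper_bound [CompleteSpace E] (f : E → ℝ) (hf : Differentiable ℝ f) (M : ℝ)
    (hlip : ∀ x y, ‖gradient f x - gradient f y‖ ≤ M * ‖x - y‖) (x y : E) :
    f y ≤ f x + ⟪gradient f x, y - x⟫ + M / 2 * ‖y - x‖ ^ 2 := by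
  set d := y - x with hd
  set φ : ℝ → ℝ := fun s => f (x + s • d) - s * ⟪gradient f x, d⟫ - M / 2 * s ^ 2 * ‖d‖ ^ 2
    with hφ
  have hder : ∀ t : ℝ, HasDerivAt φ
      ((⟪gradient f (x + t • d), d⟫ : ℝ) - ⟪gradient f x, d⟫ - M * t * ‖d‖ ^ 2) t := by
    intro t
    have h1 := gd_lineDeriv f hf x d t
    have h2 : HasDerivAt (fun s : ℝ => s * ⟪gradient f x, d⟫) (⟪gradient f x, d⟫ : ℝ) t := by
      simpa using (hasDerivAt_id t).mul_const (⟪gradient f x, d⟫ : ℝ)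
    have h3 : HasDerivAt (fun s : ℝ => M / 2 * s ^ 2 * ‖d‖ ^ 2) (M * t * ‖d‖ ^ 2) t := by
      have := ((hasDerivAt_pow 2 t).const_mul (M / 2)).mul_const (‖d‖ ^ 2)
      refine this.congr_deriv ?_
      rw [show ((2:ℕ):ℝ) * t ^ (2 - 1) = 2 * t by norm_num]
      ring
    exact (h1.sub h2).sub h3
  have hanti : AntitoneOn φ (Set.Icc 0 1) := by
    apply antitoneOn_of_deriv_nonpos (convex_Icc 0 1)
    · exact (fun t _ => (hder t).differentiableAt.continuousAt.continuousWithinAt)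
    · intro t ht
      exact ((hder t).differentiableAt.differentiableWithinAt)
    · intro t ht
      rw [interior_Icc] at ht
      rw [(hder t).deriv]
      have key : (⟪gradient f (x + t • d) - gradient f x, d⟫ : ℝ) ≤ M * t * ‖d‖ ^ 2 := by
        calc (⟪gradient f (x + t • d) - gradient f x, d⟫ : ℝ)
            ≤ ‖gradient f (x + t • d) - gradient f x‖ * ‖d‖ := real_inner_le_norm _ _
          _ ≤ M * ‖(x + t • d) - x‖ * ‖d‖ := by
              have := hlip (x + t • d) x
              have hd0 : (0:ℝ) ≤ ‖d‖ := norm_nonneg _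
              nlinarith [norm_nonneg ((x + t • d) - x)]
          _ = M * t * ‖d‖ ^ 2 := by
              rw [add_sub_cancel_left, norm_smul, Real.norm_eq_abs, abs_of_pos ht.1]
              ring
      rw [inner_sub_left] at key
      linarith
  have h01 := hanti (Set.left_mem_Icc.2 zero_le_one) (Set.right_mem_Icc.2 zero_le_one) zero_le_one
  simp only [hφ] at h01
  have e1 : x + (1:ℝ) • d = y := by rw [one_smul, hd]; abel
  have e0 : x + (0:ℝ) • d = x := by rw [zero_smul, add_zero]
  rw [e1, e0] at h01
  simp [-inner_gradient_left] at h01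
  linarith

lemma gd_lower_bound [CompleteSpace E] (f : E → ℝ) (hf : Differentiable ℝ f) (m : ℝ)
    (hmono : ∀ x y, m * ‖x - y‖ ^ 2 ≤ ⟪gradient f x - gradient f y, x - y⟫) (x y : E) :
    f x + ⟪gradient f x, y - x⟫ + m / 2 * ‖y - x‖ ^ 2 ≤ f y := by
  set d := y - x with hd
  set φ : ℝ → ℝ := fun s => f (x + s • d) - s * ⟪gradient f x, d⟫ - m / 2 * s ^ 2 * ‖d‖ ^ 2
    with hφ
  have hder : ∀ t : ℝ, HasDerivAt φ
      ((⟪gradient f (x + t • d), d⟫ : ℝ) - ⟪gradient f x, d⟫ - m * t * ‖d‖ ^ 2) t := by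
    intro t
    have h1 := gd_lineDeriv f hf x d t
    have h2 : HasDerivAt (fun s : ℝ => s * ⟪gradient f x, d⟫) (⟪gradient f x, d⟫ : ℝ) t := by
      simpa using (hasDerivAt_id t).mul_const (⟪gradient f x, d⟫ : ℝ)
    have h3 : HasDerivAt (fun s : ℝ => m / 2 * s ^ 2 * ‖d‖ ^ 2) (m * t * ‖d‖ ^ 2) t := by
      have := ((hasDerivAt_pow 2 t).const_mul (m / 2)).mul_const (‖d‖ ^ 2)
      refine this.congr_deriv ?_
      rw [show ((2:ℕ):ℝ) * t ^ (2 - 1) = 2 * t by norm_num]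
      ring
    exact (h1.sub h2).sub h3
  have hmon : MonotoneOn φ (Set.Icc 0 1) := by
    apply monotoneOn_of_deriv_nonneg (convex_Icc 0 1)
    · exact (fun t _ => (hder t).differentiableAt.continuousAt.continuousWithinAt)
    · intro t ht
      exact ((hder t).differentiableAt.differentiableWithinAt)
    · intro t ht
      rw [interior_Icc] at ht
      rw [(hder t).deriv]
      have key : m * t * ‖d‖ ^ 2 ≤ (⟪gradient f (x + t • d) - gradient f x, d⟫ : ℝ) := by
        have h := hmono (x + t • d) x
        have e : (x + t • d) - x = t • d := by abel
        rw [e] at h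
        rw [norm_smul, Real.norm_eq_abs, abs_of_pos ht.1, inner_smul_right] at h
        nlinarith [ht.1]
      rw [inner_sub_left] at key
      linarith
  have h01 := hmon (Set.left_mem_Icc.2 zero_le_one) (Set.right_mem_Icc.2 zero_le_one) zero_le_one
  simp only [hφ] at h01
  have e1 : x + (1:ℝ) • d = y := by rw [one_smul, hd]; abel
  have e0 : x + (0:ℝ) • d = x := by rw [zero_smul, add_zero]
  rw [e1, e0] at h01
  simp [-inner_gradient_left] at h01
  linarith

lemma gd_cocoercive (g : E → E) (φ : E → ℝ) (L : ℝ) (hL : 0 < L)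
    (Hlow : ∀ a b, φ a + ⟪g a, b - a⟫ ≤ φ b)
    (Hup : ∀ a b, φ b ≤ φ a + ⟪g a, b - a⟫ + L / 2 * ‖b - a‖ ^ 2) (x y : E) :
    ‖g x - g y‖ ^ 2 ≤ L * ⟪g x - g y, x - y⟫ := by
  have key : ∀ x y : E, φ y + ⟪g y, x - y⟫ + 1 / (2 * L) * ‖g x - g y‖ ^ 2 ≤ φ x := by
    intro x y
    set w := g x - g y with hw
    set z := x - L⁻¹ • w with hz
    have h1 := Hlow y z
    have h2 := Hup x z
    have e1 : z - y = (x - y) - L⁻¹ • w := by rw [hz]; abel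
    have e2 : z - x = -(L⁻¹ • w) := by rw [hz]; abel
    rw [e1, inner_sub_right] at h1
    rw [e2, inner_neg_right, inner_smul_right, norm_neg, norm_smul] at h2
    have e3 : (⟪g y, L⁻¹ • w⟫ : ℝ) = L⁻¹ * ⟪g y, w⟫ := inner_smul_right _ _ _
    rw [e3] at h1
    have e4 : (⟪g x, w⟫ : ℝ) - ⟪g y, w⟫ = ‖w‖ ^ 2 := by
      rw [← inner_sub_left, ← hw, real_inner_self_eq_norm_sq]
    have e5 : ‖L⁻¹‖ = L⁻¹ := by rw [Real.norm_eq_abs, abs_of_pos (by positivity)]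
    rw [e5] at h2
    have hL' : L ≠ 0 := ne_of_gt hL
    have expand : (L⁻¹ * ‖w‖) ^ 2 = L⁻¹ * L⁻¹ * ‖w‖ ^ 2 := by ring
    rw [expand] at h2
    have eA : L / 2 * (L⁻¹ * L⁻¹ * ‖w‖ ^ 2) = 1 / (2 * L) * ‖w‖ ^ 2 := by
      field_simp
    have eC : L⁻¹ * ⟪g x, w⟫ - L⁻¹ * ⟪g y, w⟫ = L⁻¹ * ‖w‖ ^ 2 := by
      rw [← mul_sub, e4]
    have eB : L⁻¹ * ‖w‖ ^ 2 - 1 / (2 * L) * ‖w‖ ^ 2 = 1 / (2 * L) * ‖w‖ ^ 2 := by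
      field_simp; ring
    linarith [h1, h2]
  have k1 := key x y
  have k2 := key y x
  have e6 : ‖g y - g x‖ = ‖g x - g y‖ := norm_sub_rev _ _
  rw [e6] at k2
  have e7 : (⟪g x, y - x⟫ : ℝ) = -⟪g x, x - y⟫ := by
    rw [← inner_neg_right]; congr 1; abel
  rw [e7] at k2
  have e8 : (⟪g x - g y, x - y⟫ : ℝ) = ⟪g x, x - y⟫ - ⟪g y, x - y⟫ := inner_sub_left _ _ _
  have hL' : L ≠ 0 := ne_of_gt hL
  have hinv : L * (1 / (2 * L)) = 1 / 2 := by field_simp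
  nlinarith [k1, k2, sq_nonneg ‖g x - g y‖]

end Aux

set_option maxHeartbeats 1000000 in
open EuclideanSpace in
theorem stmt0 (n : ℕ) (f : EuclideanSpace ℝ (Fin n) → ℝ)
    (hf : Differentiable ℝ f)
    (m M γ : ℝ) (hm : 0 < m) (hmM : m ≤ M)
    (hmono : ∀ x y, m * ‖x - y‖ ^ 2 ≤ inner ℝ (gradient f x - gradient f y) (x - y))
    (hlip : ∀ x y, ‖gradient f x - gradient f y‖ ≤ M * ‖x - y‖)
    (hγ0 : 0 < γ) (hγ : γ < 2 / M) :
    ∀ x y, ‖(x - γ • gradient f x) - (y - γ • gradient f y)‖ ≤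
      max |1 - γ * m| |1 - γ * M| * ‖x - y‖ := by
  intro x y
  set u := gradient f x - gradient f y with hu
  set d := x - y with hd
  set t : ℝ := inner ℝ u d with ht
  set r : ℝ := ‖u‖ with hr
  set D : ℝ := ‖d‖ with hD
  have hM : 0 < M := lt_of_lt_of_le hm hmM
  have F1 : m * D ^ 2 ≤ t := by
    have h := hmono x y
    rw [← hd, ← hu] at h
    exact h
  have F2 : r ≤ M * D := by
    have h := hlip x y
    rw [← hd, ← hu] at h
    exact h
  have hCS : t ≤ r * D := real_inner_le_norm u d
  have hr0 : 0 ≤ r := norm_nonneg _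
  have hD0 : 0 ≤ D := norm_nonneg _
  have F2sq : r ^ 2 ≤ M ^ 2 * D ^ 2 := by nlinarith [F2, hr0, hD0]
  have Frsq : m ^ 2 * D ^ 2 ≤ r ^ 2 := by
    rcases eq_or_lt_of_le hD0 with hDz | hDp
    · rw [← hDz]
      simpa using sq_nonneg r
    · have h0 : m * D * D ≤ r * D := by nlinarith [F1, hCS]
      have h1 : m * D ≤ r := le_of_mul_le_mul_right h0 hDp
      nlinarith [mul_self_le_mul_self (mul_nonneg hm.le hD0) h1]
  -- interpolation inequality
  have F3 : m * M * D ^ 2 + r ^ 2 ≤ (M + m) * t := by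
    rcases eq_or_lt_of_le hmM with heq | hlt
    · subst heq
      nlinarith [F1, F2sq, hm]
    · have nid : ∀ a b : EuclideanSpace ℝ (Fin n),
          ‖b‖ ^ 2 = ‖a‖ ^ 2 + 2 * inner ℝ a (b - a) + ‖b - a‖ ^ 2 := by
        intro a b
        have e : a + (b - a) = b := by abel
        have h := norm_add_sq_real a (b - a)
        rw [e] at h
        linarith
      have Hlow : ∀ a b : EuclideanSpace ℝ (Fin n),
          (f a - m / 2 * ‖a‖ ^ 2) + inner ℝ (gradient f a - m • a) (b - a) ≤
            f b - m / 2 * ‖b‖ ^ 2 := by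
        intro a b
        have h := gd_lower_bound f hf m hmono a b
        have hn := nid a b
        rw [inner_sub_left, real_inner_smul_left]
        nlinarith [h, hn, hm]
      have Hup : ∀ a b : EuclideanSpace ℝ (Fin n),
          f b - m / 2 * ‖b‖ ^ 2 ≤ (f a - m / 2 * ‖a‖ ^ 2) +
            inner ℝ (gradient f a - m • a) (b - a) + (M - m) / 2 * ‖b - a‖ ^ 2 := by
        intro a b
        have h := gd_upper_bound f hf M hlip a b
        have hn := nid a b
        rw [inner_sub_left, real_inner_smul_left]
        nlinarith [h, hn, hm]
      have cc' := gd_cocoercive (fun a => gradient f a - m • a)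
        (fun a => f a - m / 2 * ‖a‖ ^ 2) (M - m) (by linarith) Hlow Hup x y
      have cc : ‖(gradient f x - m • x) - (gradient f y - m • y)‖ ^ 2 ≤
          (M - m) * inner ℝ ((gradient f x - m • x) - (gradient f y - m • y)) (x - y) := cc'
      have egg : (gradient f x - m • x) - (gradient f y - m • y) = u - m • d := by
        rw [hu, hd, smul_sub]
        abel
      rw [egg, ← hd] at cc
      have en : ‖u - m • d‖ ^ 2 = r ^ 2 - 2 * (m * t) + m ^ 2 * D ^ 2 := by
        rw [norm_sub_sq_real, real_inner_smul_right, norm_smul, Real.norm_eq_abs,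
          abs_of_pos hm, ← ht, ← hr, ← hD]
        ring
      have ei : (inner ℝ (u - m • d) d : ℝ) = t - m * D ^ 2 := by
        rw [inner_sub_left, real_inner_smul_left, real_inner_self_eq_norm_sq, ← ht, ← hD]
      rw [en, ei] at cc
      nlinarith [cc]
  -- rewrite the goal
  have hFxy : (x - γ • gradient f x) - (y - γ • gradient f y) = d - γ • u := by
    simp only [hd, hu, smul_sub]
    abel
  rw [hFxy]
  set N : ℝ := ‖d - γ • u‖ with hN
  have hN0 : 0 ≤ N := norm_nonneg _
  have hN2 : N ^ 2 = D ^ 2 - 2 * (γ * t) + γ ^ 2 * r ^ 2 := by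
    rw [hN, norm_sub_sq_real, real_inner_smul_right, norm_smul, Real.norm_eq_abs,
      abs_of_pos hγ0, real_inner_comm, ← ht, ← hr, ← hD]
    ring
  rcases le_total (γ * (m + M)) 2 with hcase | hcase
  · -- contraction factor 1 - γ m
    have hc0 : 0 ≤ 1 - γ * m := by nlinarith [hγ0, hm, hmM]
    have hsq : N ^ 2 ≤ ((1 - γ * m) * D) ^ 2 := by
      nlinarith [mul_le_mul_of_nonneg_left F3 hγ0.le,
        mul_nonneg (mul_nonneg hγ0.le (sub_nonneg.2 Frsq)) (sub_nonneg.2 hcase)]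
    have hNle : N ≤ (1 - γ * m) * D := by
      calc N = Real.sqrt (N ^ 2) := (Real.sqrt_sq hN0).symm
        _ ≤ Real.sqrt (((1 - γ * m) * D) ^ 2) := Real.sqrt_le_sqrt hsq
        _ = (1 - γ * m) * D := Real.sqrt_sq (mul_nonneg hc0 hD0)
    refine hNle.trans (mul_le_mul_of_nonneg_right ?_ hD0)
    exact le_trans (le_abs_self _) (le_max_left _ _)
  · -- contraction factor γ M - 1
    have hc0 : 0 ≤ γ * M - 1 := by nlinarith [hγ0, hmM]
    have hsq : N ^ 2 ≤ ((γ * M - 1) * D) ^ 2 := by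
      nlinarith [mul_le_mul_of_nonneg_left F3 hγ0.le,
        mul_nonneg (mul_nonneg hγ0.le (sub_nonneg.2 F2sq)) (sub_nonneg.2 hcase)]
    have hNle : N ≤ (γ * M - 1) * D := by
      calc N = Real.sqrt (N ^ 2) := (Real.sqrt_sq hN0).symm
        _ ≤ Real.sqrt (((γ * M - 1) * D) ^ 2) := Real.sqrt_le_sqrt hsq
        _ = (γ * M - 1) * D := Real.sqrt_sq (mul_nonneg hc0 hD0)
    refine hNle.trans (mul_le_mul_of_nonneg_right ?_ hD0)
    have : γ * M - 1 ≤ |1 - γ * M| := by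
      rw [abs_sub_comm]
      exact le_abs_self _
    exact this.trans (le_max_right _ _)
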